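/- Let f : (0,∞) → ℝ be differentiable, convex with f(1) = 0, and let P, Q ∈ Γ_n satisfy 0 < r ≤ p_i/q_i ≤ R < ∞ for all i with r ≤ 1 ≤ R and r ≠ R. Then 0 ≤ ∑ q_i f(p_i/q_i) ≤ ((R-1)f(r) + (1-r)f(R))/(R-r). -/

import Mathlib

open Finset Real

theorem stmt4 (f : ℝ → ℝ) (hdf : ∀ x ∈ Set.Ioi (0:ℝ), DifferentiableAt ℝ f x)
    (hcf : ConvexOn ℝ (Set.Ioi 0) f) (hf1 : f 1 = 0)
    (n : ℕ) (p q : Fin n → ℝ)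
    (hp : ∀ i, 0 < p i) (hq : ∀ i, 0 < q i)
    (hp1 : ∑ i, p i = 1) (hq1 : ∑ i, q i = 1)
    (r R : ℝ) (hr : 0 < r) (hr1 : r ≤ 1) (h1R : 1 ≤ R) (hne : r ≠ R)
    (hrR : ∀ i, r ≤ p i / q i ∧ p i / q i ≤ R) :
    0 ≤ ∑ i, q i * f (p i / q i) ∧
      ∑ i, q i * f (p i / q i) ≤ ((R - 1) * f r + (1 - r) * f R) / (R - r) := by
  have hrR' : r < R := lt_of_le_of_ne (hr1.trans h1R) hne
  have hRr : (0:ℝ) < R - r := by linarith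
  have hR0 : (0:ℝ) < R := lt_of_lt_of_le one_pos h1R
  have hx : ∀ i, q i * (p i / q i) = p i := fun i => mul_div_cancel₀ _ (hq i).ne'
  have hsum : ∑ i, q i * (p i / q i) = 1 := by
    simp_rw [hx]; exact hp1
  constructor
  · have h := hcf.map_sum_le (t := Finset.univ) (w := q) (p := fun i => p i / q i)
      (fun i _ => (hq i).le) hq1 (fun i _ => Set.mem_Ioi.2 (div_pos (hp i) (hq i)))
    simp only [smul_eq_mul] at h
    rwa [hsum, hf1] at h
  · have key : ∀ i, q i * f (p i / q i) ≤
        q i * (((R - p i / q i) * f r + (p i / q i - r) * f R) / (R - r)) := by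
      intro i
      apply mul_le_mul_of_nonneg_left _ (hq i).le
      set x := p i / q i with hxdef
      have hxr := (hrR i).1
      have hxR := (hrR i).2
      have ha : 0 ≤ (R - x) / (R - r) := div_nonneg (by linarith) hRr.le
      have hb : 0 ≤ (x - r) / (R - r) := div_nonneg (by linarith) hRr.le
      have hab : (R - x) / (R - r) + (x - r) / (R - r) = 1 := by
        field_simp; ring
      have h := hcf.2 (Set.mem_Ioi.2 hr) (Set.mem_Ioi.2 hR0) ha hb hab
      simp only [smul_eq_mul] at h
      have hcomb : (R - x) / (R - r) * r + (x - r) / (R - r) * R = x := by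
        field_simp; ring
      rw [hcomb] at h
      calc f x ≤ (R - x) / (R - r) * f r + (x - r) / (R - r) * f R := h
        _ = ((R - x) * f r + (x - r) * f R) / (R - r) := by ring
    calc ∑ i, q i * f (p i / q i)
        ≤ ∑ i, q i * (((R - p i / q i) * f r + (p i / q i - r) * f R) / (R - r)) :=
          Finset.sum_le_sum fun i _ => key i
      _ = ∑ i, (q i * (R * f r - r * f R) + p i * (f R - f r)) / (R - r) := by
          refine Finset.sum_congr rfl fun i _ => ?_
          rw [show q i * (((R - p i / q i) * f r + (p i / q i - r) * f R) / (R - r))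
              = (q i * (R * f r - r * f R) + (q i * (p i / q i)) * (f R - f r)) / (R - r) by
            ring, hx i]
      _ = ((∑ i, q i) * (R * f r - r * f R) + (∑ i, p i) * (f R - f r)) / (R - r) := by
          rw [← Finset.sum_div, Finset.sum_add_distrib, ← Finset.sum_mul, ← Finset.sum_mul]
      _ = ((R - 1) * f r + (1 - r) * f R) / (R - r) := by
          rw [hp1, hq1]; ring
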